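/- Let ℍ = {z ∈ ℂ : Im z > 0} be the upper half-plane, let m be a positive integer, and define Ω_m : ℍ × ℍ → ℂ by Ω_m(z,w) = (2i·√(Im z · Im w)/(z − conj(w)))^m, where √ is the nonnegative real square root. Then for every g = (a b; c d) ∈ SL(2,ℝ) acting on ℍ by Möbius transformations g·z = (az+b)/(cz+d): (a) |Ω_m(g·x, g·y)| = |Ω_m(x,y)| for all x, y ∈ ℍ; and (b) the 3-point function Δ(x,y,z) := Ω_m(x,y)·Ω_m(y,z)·Ω_m(z,x) is invariant: Δ(g·x, g·y, g·z) = Δ(x,y,z) for all x, y, z ∈ ℍ. In particular the normalized cocycle [Δ](x,y,z) = Δ(x,y,z)/|Ω_m(x,z)|² is invariant under orientation-preserving isometries of ℍ. -/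

import Mathlib

open MeasureTheory

/-- The equal-time propagator of the hyperbolic plane (upper half-plane model) at
`hbar = 2/m`: `Ω_m(z,w) = (2i·√(Im z · Im w)/(z − conj w))^m`. -/
noncomputable def hypPropagator (m : ℕ) (z w : ℂ) : ℂ :=
  (2 * Complex.I * (Real.sqrt (z.im * w.im) : ℂ) / (z - (starRingEnd ℂ) w)) ^ m

/-- Möbius action of a real 2×2 matrix `(a b; c d)` on `ℂ`. -/
noncomputable def moebius (a b c d : ℝ) (z : ℂ) : ℂ :=
  ((a : ℂ) * z + (b : ℂ)) / ((c : ℂ) * z + (d : ℂ))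

lemma my_denom_ne (a b c d : ℝ) (hdet : a * d - b * c = 1) {z : ℂ} (hz : 0 < z.im) :
    (c:ℂ) * z + (d:ℂ) ≠ 0 := by
  intro h
  have him : c * z.im = 0 := by
    have := congrArg Complex.im h
    simpa using this
  rcases mul_eq_zero.1 him with hc | h0
  · have hd : (d:ℂ) = 0 := by simpa [hc] using h
    have : d = 0 := by exact_mod_cast hd
    rw [hc, this] at hdet; simp at hdet
  · linarith

lemma my_moebius_im (a b c d : ℝ) (hdet : a * d - b * c = 1) (z : ℂ) :
    (moebius a b c d z).im = z.im / Complex.normSq ((c:ℂ) * z + (d:ℂ)) := by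
  rw [moebius, Complex.div_im, div_sub_div_same]
  congr 1
  simp [Complex.add_im, Complex.add_re, Complex.mul_im, Complex.mul_re]
  ring_nf
  linear_combination z.im * hdet
lemma my_moebius_sub (a b c d : ℝ) (hdet : a * d - b * c = 1) {x y : ℂ}
    (hx : 0 < x.im) (hy : 0 < y.im) :
    moebius a b c d x - (starRingEnd ℂ) (moebius a b c d y) =
      (x - (starRingEnd ℂ) y) / (((c:ℂ) * x + d) * (starRingEnd ℂ) ((c:ℂ) * y + d)) := by
  have hA := my_denom_ne a b c d hdet hx
  have hB := my_denom_ne a b c d hdet hy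
  have hdetC : (a:ℂ) * d - b * c = 1 := by exact_mod_cast hdet
  have hB' : (c:ℂ) * (starRingEnd ℂ) y + d ≠ 0 := by
    intro h
    apply hB
    have := congrArg (starRingEnd ℂ) h
    simpa using this
  rw [moebius, moebius, map_div₀]
  simp only [map_add, map_mul, Complex.conj_ofReal]
  rw [div_sub_div _ _ hA hB']
  congr 1
  ring_nf
  linear_combination (x - (starRingEnd ℂ) y) * hdetC
lemma my_key (m : ℕ) (a b c d : ℝ) (hdet : a * d - b * c = 1) {x y : ℂ}
    (hx : 0 < x.im) (hy : 0 < y.im) :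
    hypPropagator m (moebius a b c d x) (moebius a b c d y) =
      hypPropagator m x y *
        ((((c:ℂ) * x + d) / ((‖(c:ℂ) * x + d‖ : ℝ) : ℂ)) *
         (starRingEnd ℂ) (((c:ℂ) * y + d) / ((‖(c:ℂ) * y + d‖ : ℝ) : ℂ))) ^ m := by
  have hA := my_denom_ne a b c d hdet hx
  have hB := my_denom_ne a b c d hdet hy
  have hAa : ‖(c:ℂ) * x + d‖ ≠ 0 := by simpa using hA
  have hBa : ‖(c:ℂ) * y + d‖ ≠ 0 := by simpa using hB
  have hB' : (starRingEnd ℂ) ((c:ℂ) * y + d) ≠ 0 := by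
    intro h
    apply hB
    have := congrArg (starRingEnd ℂ) h
    simpa using this
  have hxy : x - (starRingEnd ℂ) y ≠ 0 := by
    intro h
    have := congrArg Complex.im h
    simp [Complex.sub_im, Complex.conj_im] at this
    linarith
  unfold hypPropagator
  rw [← mul_pow]
  congr 1
  rw [my_moebius_sub a b c d hdet hx hy, my_moebius_im a b c d hdet,
    my_moebius_im a b c d hdet]
  have hs : Real.sqrt (x.im / Complex.normSq ((c:ℂ) * x + d) *
      (y.im / Complex.normSq ((c:ℂ) * y + d))) =
      Real.sqrt (x.im * y.im) /
        (‖(c:ℂ) * x + d‖ * ‖(c:ℂ) * y + d‖) := by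
    rw [div_mul_div_comm, Real.sqrt_div (by positivity), Real.sqrt_mul (Complex.normSq_nonneg _),
      ← Complex.norm_def, ← Complex.norm_def]
  rw [hs]
  push_cast
  rw [map_div₀, Complex.conj_ofReal]
  field_simp

/-- For every `g = (a b; c d) ∈ SL(2,ℝ)` acting on the upper
half-plane by Möbius transformations: (a) `|Ω_m(g·x, g·y)| = |Ω_m(x,y)|`;
(b) the 3-point function `Δ(x,y,z) = Ω_m(x,y)Ω_m(y,z)Ω_m(z,x)` is invariant;
and in particular (c) the normalized cocycle `[Δ] = Δ(x,y,z)/|Ω_m(x,z)|²` is invariant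
under orientation-preserving isometries of `ℍ`. -/
theorem hypPropagator_moebius_invariance
    (m : ℕ) (hm : 0 < m) (a b c d : ℝ) (hdet : a * d - b * c = 1) :
    ∀ x y z : ℂ, 0 < x.im → 0 < y.im → 0 < z.im →
      (‖hypPropagator m (moebius a b c d x) (moebius a b c d y)‖ =
        ‖hypPropagator m x y‖) ∧
      (hypPropagator m (moebius a b c d x) (moebius a b c d y) *
        hypPropagator m (moebius a b c d y) (moebius a b c d z) *
        hypPropagator m (moebius a b c d z) (moebius a b c d x) =
        hypPropagator m x y * hypPropagator m y z * hypPropagator m z x) ∧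
      (hypPropagator m (moebius a b c d x) (moebius a b c d y) *
        hypPropagator m (moebius a b c d y) (moebius a b c d z) *
        hypPropagator m (moebius a b c d z) (moebius a b c d x) /
        ((‖hypPropagator m (moebius a b c d x) (moebius a b c d z)‖ : ℂ) ^ 2) =
        hypPropagator m x y * hypPropagator m y z * hypPropagator m z x /
        ((‖hypPropagator m x z‖ : ℂ) ^ 2)) := by
  intro x y z hx hy hz
  have habs : ∀ w : ℂ, 0 < w.im →
      ‖((c:ℂ) * w + d) / ((‖(c:ℂ) * w + d‖ : ℝ) : ℂ)‖ = 1 := by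
    intro w hw
    have hW := my_denom_ne a b c d hdet hw
    have hWa : ‖(c:ℂ) * w + d‖ ≠ 0 := by simpa using hW
    rw [norm_div, Complex.norm_real, Real.norm_eq_abs, abs_of_nonneg (norm_nonneg _), div_self hWa]
  have habsx := habs x hx
  have habsy := habs y hy
  have habsz := habs z hz
  have kxy := my_key m a b c d hdet hx hy
  have kyz := my_key m a b c d hdet hy hz
  have kzx := my_key m a b c d hdet hz hx
  have kxz := my_key m a b c d hdet hx hz
  set px : ℂ := ((c:ℂ) * x + d) / ((‖(c:ℂ) * x + d‖ : ℝ) : ℂ) with hpx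
  set py : ℂ := ((c:ℂ) * y + d) / ((‖(c:ℂ) * y + d‖ : ℝ) : ℂ) with hpy
  set pz : ℂ := ((c:ℂ) * z + d) / ((‖(c:ℂ) * z + d‖ : ℝ) : ℂ) with hpz
  have hux : px * (starRingEnd ℂ) px = 1 := by
    rw [Complex.mul_conj, Complex.normSq_eq_norm_sq, habsx]; norm_num
  have huy : py * (starRingEnd ℂ) py = 1 := by
    rw [Complex.mul_conj, Complex.normSq_eq_norm_sq, habsy]; norm_num
  have huz : pz * (starRingEnd ℂ) pz = 1 := by
    rw [Complex.mul_conj, Complex.normSq_eq_norm_sq, habsz]; norm_num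
  clear_value px py pz
  have ha : ∀ u v : ℂ, 0 < u.im → 0 < v.im →
      ‖hypPropagator m (moebius a b c d u) (moebius a b c d v)‖ = ‖hypPropagator m u v‖ := by
    intro u v hu hv
    rw [my_key m a b c d hdet hu hv, norm_mul, norm_pow, norm_mul, RCLike.norm_conj]
    simp only [habs u hu, habs v hv]
    norm_num
  have hb : hypPropagator m (moebius a b c d x) (moebius a b c d y) *
      hypPropagator m (moebius a b c d y) (moebius a b c d z) *
      hypPropagator m (moebius a b c d z) (moebius a b c d x) =
      hypPropagator m x y * hypPropagator m y z * hypPropagator m z x := by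
    rw [kxy, kyz, kzx]
    have hone : (px * (starRingEnd ℂ) py) * ((py * (starRingEnd ℂ) pz) *
        (pz * (starRingEnd ℂ) px)) = 1 := by
      have e : (px * (starRingEnd ℂ) py) * ((py * (starRingEnd ℂ) pz) *
          (pz * (starRingEnd ℂ) px)) =
          (px * (starRingEnd ℂ) px) * ((py * (starRingEnd ℂ) py) *
          (pz * (starRingEnd ℂ) pz)) := by ring
      rw [e, hux, huy, huz]; norm_num
    calc hypPropagator m x y * (px * (starRingEnd ℂ) py) ^ m *
          (hypPropagator m y z * (py * (starRingEnd ℂ) pz) ^ m) *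
          (hypPropagator m z x * (pz * (starRingEnd ℂ) px) ^ m)
        = hypPropagator m x y * hypPropagator m y z * hypPropagator m z x *
          ((px * (starRingEnd ℂ) py) * ((py * (starRingEnd ℂ) pz) *
            (pz * (starRingEnd ℂ) px))) ^ m := by ring
      _ = hypPropagator m x y * hypPropagator m y z * hypPropagator m z x := by
          rw [hone, one_pow, mul_one]
  refine ⟨ha x y hx hy, hb, ?_⟩
  rw [hb, ha x z hx hz]
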